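/- For every even n ≥ 2, the edge set of the complete graph on Fin n can be partitioned into n/2 paths, each visiting all n vertices (Hamiltonian paths), such that the edge set of each path consists of pairwise non-crossing chords. -/

import Mathlib

/-- `x` lies strictly inside the open clockwise arc from `a` to `b` on the convex
`n`-gon whose vertices are `Fin n` in clockwise cyclic order. -/
def InArc (n : ℕ) (a b x : Fin n) : Prop :=
  0 < (x - a).val ∧ (x - a).val < (b - a).val

/-- Two chords of the convex `n`-gon cross: their four endpoints are distinct and
interleave in the cyclic order, i.e. one endpoint of the second chord lies strictly
inside each of the two open arcs determined by the first chord. -/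
def Cross (n : ℕ) (e f : Sym2 (Fin n)) : Prop :=
  ∃ a b c d : Fin n, e = s(a, b) ∧ f = s(c, d) ∧ InArc n a b c ∧ InArc n b a d


/-- The edge set of the Hamiltonian path on `Fin n` that visits the vertices in the
order `σ 0, σ 1, …, σ (n-1)`: the chords joining consecutive vertices of the path. -/
def PathEdges (n : ℕ) (σ : Fin n ≃ Fin n) : Set (Sym2 (Fin n)) :=
  {e | ∃ (j : ℕ) (h : j + 1 < n), e = s(σ ⟨j, Nat.lt_of_succ_lt h⟩, σ ⟨j + 1, h⟩)}

/-- For every even `n ≥ 2`, the edge set of the complete graph on `Fin n`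
(the `n` points in convex position) can be partitioned into `n / 2` Hamiltonian paths,
each of whose edge sets consists of pairwise non-crossing chords.  Each path is given
by the order `σ i` in which it visits the `n` vertices; the partition property says
that every chord belongs to the edge set of exactly one of the paths. -/

def zigTo (n j : ℕ) : ℕ := if j % 2 = 0 then j / 2 else n - (j+1)/2
def zigInv (n v : ℕ) : ℕ := if 2 * v < n then 2 * v else 2 * (n - v) - 1

def zig (n : ℕ) [NeZero n] : Fin n ≃ Fin n where
  toFun j := ⟨zigTo n j.val, by have := j.isLt; unfold zigTo; split <;> omega⟩
  invFun v := ⟨zigInv n v.val, by have := v.isLt; unfold zigInv; split <;> omega⟩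
  left_inv j := by
    have := j.isLt
    apply Fin.ext
    show zigInv n (zigTo n j.val) = j.val
    unfold zigTo zigInv
    split <;> split <;> omega
  right_inv v := by
    have := v.isLt
    apply Fin.ext
    show zigTo n (zigInv n v.val) = v.val
    unfold zigTo zigInv
    split <;> split <;> omega

def pathPerm (n : ℕ) [NeZero n] (c : Fin n) : Fin n ≃ Fin n :=
  (zig n).trans (Equiv.addLeft c)

lemma pathPerm_apply (n : ℕ) [NeZero n] (c : Fin n) (j : Fin n) :
    pathPerm n c j = c + zig n j := rfl

lemma zigTo_adj (n j : ℕ) (h : j + 1 < n) (hev : n % 2 = 0) :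
    zigTo n j + zigTo n (j+1) = n - 1 ∨ zigTo n j + zigTo n (j+1) = n := by
  unfold zigTo; split <;> split <;> omega

section main
variable (n : ℕ) [NeZero n]

lemma val_one_n (hn : 2 ≤ n) : ((1 : Fin n) : ℕ) = 1 := by
  rw [Fin.val_one']; exact Nat.mod_eq_of_lt (by omega)

lemma zig_adj (hn : 2 ≤ n) (hev : n % 2 = 0) (j : ℕ) (h : j + 1 < n) :
    zig n ⟨j, Nat.lt_of_succ_lt h⟩ + zig n ⟨j+1, h⟩ = 0 ∨
    zig n ⟨j, Nat.lt_of_succ_lt h⟩ + zig n ⟨j+1, h⟩ + 1 = 0 := by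
  have hv : (zig n ⟨j, Nat.lt_of_succ_lt h⟩).val + (zig n ⟨j+1, h⟩).val
      = zigTo n j + zigTo n (j+1) := rfl
  rcases zigTo_adj n j h hev with hs | hs
  · right
    have hx : (zig n ⟨j, Nat.lt_of_succ_lt h⟩ + zig n ⟨j+1, h⟩).val = n - 1 := by
      rw [Fin.val_add, hv, hs]; exact Nat.mod_eq_of_lt (by omega)
    apply Fin.ext
    rw [Fin.val_add, hx, val_one_n n hn, Fin.val_zero]
    have : n - 1 + 1 = n := by omega
    rw [this, Nat.mod_self]
  · left
    apply Fin.ext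
    rw [Fin.val_add, hv, hs, Fin.val_zero, Nat.mod_self]

lemma val_neg_one (hn : 2 ≤ n) : ((-1 : Fin n) : ℕ) = n - 1 := by
  have h0 : (-1 : Fin n) = 0 - 1 := by rw [zero_sub]
  rw [h0, Fin.sub_def]
  show (n - ((1:Fin n):ℕ) + ((0:Fin n):ℕ)) % n = n - 1
  rw [val_one_n n hn, Fin.val_zero, Nat.add_zero]
  exact Nat.mod_eq_of_lt (by omega)

lemma modn_char (x : ℕ) (hx : x < 2*n) : x % n = if x < n then x else x - n := by
  have hn := Nat.pos_of_ne_zero (NeZero.ne n)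
  rcases Nat.lt_or_ge x n with h | h
  · rw [if_pos h, Nat.mod_eq_of_lt h]
  · rw [if_neg (by omega), Nat.mod_eq_sub_mod h, Nat.mod_eq_of_lt (by omega)]

lemma mem_char (hn : 2 ≤ n) (hev : n % 2 = 0) (t a b : Fin n) :
    s(a,b) ∈ PathEdges n (pathPerm n t) ↔
      a ≠ b ∧ (a + b = t + t ∨ a + b + 1 = t + t) := by
  constructor
  · rintro ⟨j, h, he⟩
    rw [Sym2.eq_iff] at he
    have hxy : pathPerm n t ⟨j, Nat.lt_of_succ_lt h⟩ ≠ pathPerm n t ⟨j+1, h⟩ := by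
      intro hc
      have := (pathPerm n t).injective hc
      simp only [Fin.mk.injEq] at this
      omega
    have hsum : pathPerm n t ⟨j, Nat.lt_of_succ_lt h⟩ + pathPerm n t ⟨j+1, h⟩ = t + t
        ∨ pathPerm n t ⟨j, Nat.lt_of_succ_lt h⟩ + pathPerm n t ⟨j+1, h⟩ + 1 = t + t := by
      rw [pathPerm_apply, pathPerm_apply]
      rcases zig_adj n hn hev j h with hz | hz
      · left
        calc t + zig n ⟨j, Nat.lt_of_succ_lt h⟩ + (t + zig n ⟨j+1, h⟩)
            = t + t + (zig n ⟨j, Nat.lt_of_succ_lt h⟩ + zig n ⟨j+1, h⟩) := by abel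
          _ = t + t := by rw [hz, add_zero]
      · right
        calc t + zig n ⟨j, Nat.lt_of_succ_lt h⟩ + (t + zig n ⟨j+1, h⟩) + 1
            = t + t + (zig n ⟨j, Nat.lt_of_succ_lt h⟩ + zig n ⟨j+1, h⟩ + 1) := by abel
          _ = t + t := by rw [hz, add_zero]
    rcases he with ⟨ha, hb⟩ | ⟨ha, hb⟩ <;> subst ha <;> subst hb
    · exact ⟨hxy, hsum⟩
    · refine ⟨fun hc => hxy hc.symm, ?_⟩
      rcases hsum with hs | hs
      · left; rw [← hs]; abel
      · right; rw [← hs]; abel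
  · rintro ⟨hne, hsum⟩
    set k := (a - t).val with hk
    set l := (b - t).val with hl
    have hkn : k < n := (a - t).isLt
    have hln : l < n := (b - t).isLt
    have hta : t + (a - t) = a := by abel
    have htb : t + (b - t) = b := by abel
    have hknel : k ≠ l := by
      intro hc
      apply hne
      have : a - t = b - t := Fin.ext hc
      rw [← hta, ← htb, this]
    have hvadd : ((a - t) + (b - t)).val = (k + l) % n := Fin.val_add _ _
    -- helper to produce membership from explicit j and endpoint identification
    have build : ∀ (j : ℕ) (hj : j + 1 < n),
        zig n ⟨j, Nat.lt_of_succ_lt hj⟩ = a - t → zig n ⟨j+1, hj⟩ = b - t →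
        s(a,b) ∈ PathEdges n (pathPerm n t) := by
      intro j hj h1 h2
      exact ⟨j, hj, by rw [pathPerm_apply, pathPerm_apply, h1, h2, hta, htb]⟩
    have build' : ∀ (j : ℕ) (hj : j + 1 < n),
        zig n ⟨j, Nat.lt_of_succ_lt hj⟩ = b - t → zig n ⟨j+1, hj⟩ = a - t →
        s(a,b) ∈ PathEdges n (pathPerm n t) := by
      intro j hj h1 h2
      exact ⟨j, hj, by rw [pathPerm_apply, pathPerm_apply, h1, h2, hta, htb,
        Sym2.eq_swap]⟩
    rcases hsum with hs | hs
    · -- k + l = n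
      have h0 : (a - t) + (b - t) = 0 := by
        have : (a - t) + (b - t) = (a + b) - (t + t) := by abel
        rw [this, hs, sub_self]
      have hmod : (k + l) % n = 0 := by rw [← hvadd, h0, Fin.val_zero]
      rw [modn_char n (k+l) (by omega)] at hmod
      have hkl : k + l = n := by split at hmod <;> omega
      have hk1 : 1 ≤ k := by omega
      have hl1 : 1 ≤ l := by omega
      rcases Nat.lt_or_ge k l with hlt | hge
      · -- k < l, so 2k < n ; j = 2k - 1
        refine build' (2*k - 1) (by omega) ?_ ?_
        · apply Fin.ext
          show zigTo n (2*k - 1) = l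
          unfold zigTo; split <;> omega
        · apply Fin.ext
          show zigTo n (2*k - 1 + 1) = k
          unfold zigTo; split <;> omega
      · have hlt : l < k := by omega
        refine build (2*l - 1) (by omega) ?_ ?_
        · apply Fin.ext
          show zigTo n (2*l - 1) = k
          unfold zigTo; split <;> omega
        · apply Fin.ext
          show zigTo n (2*l - 1 + 1) = l
          unfold zigTo; split <;> omega
    · -- k + l = n - 1
      have h0 : (a - t) + (b - t) = -1 := by
        have h1 : (a - t) + (b - t) + 1 = (a + b + 1) - (t + t) := by abel
        have h2 : (a - t) + (b - t) + 1 = 0 := by rw [h1, hs, sub_self]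
        linear_combination (norm := abel) h2
      have hmod : (k + l) % n = n - 1 := by rw [← hvadd, h0, val_neg_one n hn]
      rw [modn_char n (k+l) (by omega)] at hmod
      have hkl : k + l = n - 1 := by split at hmod <;> omega
      rcases Nat.lt_or_ge k l with hlt | hge
      · refine build (2*k) (by omega) ?_ ?_
        · apply Fin.ext
          show zigTo n (2*k) = k
          unfold zigTo; split <;> omega
        · apply Fin.ext
          show zigTo n (2*k+1) = l
          unfold zigTo; split <;> omega
      · have hlt : l < k := by omega
        refine build' (2*l) (by omega) ?_ ?_
        · apply Fin.ext
          show zigTo n (2*l) = l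
          unfold zigTo; split <;> omega
        · apply Fin.ext
          show zigTo n (2*l+1) = k
          unfold zigTo; split <;> omega

lemma sub_val_add (a b : Fin n) (hne : a ≠ b) : (a - b).val + (b - a).val = n := by
  have h0 : (a - b) + (b - a) = 0 := by abel
  have hv : ((a - b).val + (b - a).val) % n = 0 := by
    rw [← Fin.val_add, h0, Fin.val_zero]
  have h1 : (a - b).val ≠ 0 := by
    intro hc
    exact hne (sub_eq_zero.mp (Fin.ext (by rw [hc, Fin.val_zero])))
  have hb1 : (a - b).val < n := (a - b).isLt
  have hb2 : (b - a).val < n := (b - a).isLt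
  rw [modn_char n _ (by omega)] at hv
  split at hv <;> omega

lemma no_cross (hn : 2 ≤ n) (hev : n % 2 = 0) (t : Fin n) :
    ∀ e ∈ PathEdges n (pathPerm n t), ∀ f ∈ PathEdges n (pathPerm n t),
      ¬ Cross n e f := by
  intro e he f hf hcross
  obtain ⟨a, b, c, d, rfl, rfl, hc, hd⟩ := hcross
  obtain ⟨hab, hP⟩ := (mem_char n hn hev t a b).mp he
  obtain ⟨hcd, hQ⟩ := (mem_char n hn hev t c d).mp hf
  obtain ⟨hc1, hc2⟩ := hc
  obtain ⟨hd1, hd2⟩ := hd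
  have hsub := sub_val_add n a b hab
  set α := (c - a).val with hα
  set β := (d - b).val with hβ
  have hrange : 2 ≤ α + β ∧ α + β ≤ n - 2 := by constructor <;> omega
  set w : Fin n := (c - a) + (d - b) with hw
  have hQP : c + d = (a + b) + w := by rw [hw]; abel
  have hwval : w.val = α + β := by
    rw [hw, Fin.val_add, ← hα, ← hβ]
    exact Nat.mod_eq_of_lt (by omega)
  have hwcases : w = 0 ∨ w = 1 ∨ w = -1 := by
    rcases hP with h1 | h1 <;> rcases hQ with h2 | h2
    · left
      have : (a + b) + w = (a + b) + 0 := by rw [add_zero, ← hQP, h1, h2]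
      exact add_left_cancel this
    · right; right
      have : (a + b) + (w + 1) = (a + b) + 0 := by
        rw [add_zero, ← add_assoc, ← hQP, h1, h2]
      have h3 : w + 1 = 0 := add_left_cancel this
      linear_combination (norm := abel) h3
    · right; left
      have : (a + b) + w = (a + b) + 1 := by
        rw [← hQP, h2, ← h1]
      exact add_left_cancel this
    · left
      have : (a + b) + (w + 1) = (a + b) + 1 := by
        rw [← add_assoc, ← hQP, h2, ← h1]
      have h3 : w + 1 = 1 := add_left_cancel this
      linear_combination (norm := abel) h3
  rcases hwcases with h | h | h
  · rw [h, Fin.val_zero] at hwval; omega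
  · rw [h, val_one_n n hn] at hwval; omega
  · rw [h, val_neg_one n hn] at hwval; omega

end main

theorem stmt_4 (n : ℕ) (hn : 2 ≤ n) (heven : Even n) :
    ∃ σ : Fin (n / 2) → (Fin n ≃ Fin n),
      (∀ i : Fin (n / 2), ∀ e ∈ PathEdges n (σ i), ∀ f ∈ PathEdges n (σ i),
        ¬ Cross n e f) ∧
      (∀ a b : Fin n, a ≠ b → ∃! i : Fin (n / 2), s(a, b) ∈ PathEdges n (σ i)) := by
  haveI : NeZero n := ⟨by omega⟩
  have hev : n % 2 = 0 := Nat.even_iff.mp heven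
  set T : Fin (n / 2) → Fin n := fun i => Fin.ofNat n i.val with hT
  have hTval : ∀ i : Fin (n / 2), (T i).val = i.val := by
    intro i
    have hi : i.val < n := by have := i.isLt; omega
    exact Nat.mod_eq_of_lt hi
  have hTT : ∀ i : Fin (n / 2), (T i + T i).val = 2 * i.val := by
    intro i
    have hi := i.isLt
    rw [Fin.val_add, hTval]
    rw [Nat.mod_eq_of_lt (by omega)]
    omega
  refine ⟨fun i => pathPerm n (T i), ?_, ?_⟩
  · intro i
    exact no_cross n hn hev (T i)
  · intro a b hab
    have hsl : (a + b).val < n := (a + b).isLt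
    have key : ∃ i : Fin (n / 2),
        a + b = T i + T i ∨ a + b + 1 = T i + T i := by
      by_cases hpar : (a + b).val % 2 = 0
      · refine ⟨⟨(a + b).val / 2, by omega⟩, Or.inl ?_⟩
        apply Fin.ext
        rw [hTT]
        show (a + b).val = 2 * ((a + b).val / 2)
        omega
      · by_cases htop : (a + b).val = n - 1
        · refine ⟨⟨0, by omega⟩, Or.inr ?_⟩
          apply Fin.ext
          rw [hTT, Fin.val_add, val_one_n n hn, htop]
          have h1 : n - 1 + 1 = n := by omega
          rw [h1, Nat.mod_self]
          show (0:ℕ) = 2 * (0:ℕ)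
          omega
        · refine ⟨⟨((a + b).val + 1) / 2, by omega⟩, Or.inr ?_⟩
          apply Fin.ext
          rw [hTT, Fin.val_add, val_one_n n hn,
            Nat.mod_eq_of_lt (by omega)]
          show (a + b).val + 1 = 2 * (((a + b).val + 1) / 2)
          omega
    obtain ⟨i, hi⟩ := key
    refine ⟨i, (mem_char n hn hev (T i) a b).mpr ⟨hab, hi⟩, ?_⟩
    intro j hj
    have hj' := ((mem_char n hn hev (T j) a b).mp hj).2
    apply Fin.ext
    have h2i : 2 * i.val < n := by have := i.isLt; omega
    have h2j : 2 * j.val < n := by have := j.isLt; omega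
    have hplus : ∀ m : Fin (n / 2), (T m + T m + 1).val = 2 * m.val + 1 := by
      intro m
      have := m.isLt
      rw [Fin.val_add, hTT, val_one_n n hn]
      exact Nat.mod_eq_of_lt (by omega)
    rcases hi with h1 | h1 <;> rcases hj' with h2 | h2
    · have : (T i + T i).val = (T j + T j).val := by rw [← h1, ← h2]
      rw [hTT, hTT] at this; omega
    · have h3 : (T j + T j) = (T i + T i) + 1 := by rw [← h2, ← h1]
      have : (T j + T j).val = (T i + T i + 1).val := by rw [h3]
      rw [hTT, hplus] at this; omega
    · have h3 : (T i + T i) = (T j + T j) + 1 := by rw [← h1, ← h2]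
      have : (T i + T i).val = (T j + T j + 1).val := by rw [h3]
      rw [hTT, hplus] at this; omega
    · have h3 : (T i + T i) + 1 = (T j + T j) + 1 := by rw [← h1, ← h2]
      have : (T i + T i).val = (T j + T j).val := by
        have := add_right_cancel h3
        rw [this]
      rw [hTT, hTT] at this; omega
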